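/- Let k ≥ 3, a : Fin k → ℝ, m : ℝ, and let ω : Fin k → ℝ be a weight vector with ω ≠ 0. If the generalized operator annihilates the whole weighted sequence, i.e. T_{a,m}(P_{n,ω}) = 0 for all n ≥ 1, then a_j = 1 for all 1 ≤ j ≤ k and (m = 1 or m = 2). (The generalized operator D₁₁ − Σ_j a_j t_j D_{2j} − m D₂ has nonzero kernel on the WIP-module only for the original operators T_1 and T_2.) -/

import Mathlib

open MvPolynomial Finset

/-- The weight coefficient `A_ω(α)` of Theorem 2.1 (for `α ≠ 0`):
`A_ω(α) = multinomial(α) · (Σ α_i ω_i) / (Σ α_i)`. -/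
noncomputable def Aw {k : ℕ} (ω : Fin k → ℝ) (α : Fin k → ℕ) : ℝ :=
  (Nat.multinomial Finset.univ α : ℝ) * (∑ i, (α i : ℝ) * ω i) / (∑ i, (α i : ℝ))

/-- The isobaric degree `Σ_{i=1}^k i·α_i` of an exponent vector. -/
def isoDeg {k : ℕ} (α : Fin k → ℕ) : ℕ := ∑ i, (i.1 + 1) * α i

/-- The (finite) set of exponent vectors of isobaric degree `n`. -/
def wipIndex (k n : ℕ) : Finset (Fin k → ℕ) :=
  (Fintype.piFinset fun _ : Fin k => Finset.range (n + 1)).filter fun α => isoDeg α = n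

/-- The weighted isobaric polynomial `P_{n,ω} = Σ_α A_ω(α)·t^α`. -/
noncomputable def WIP (k n : ℕ) (ω : Fin k → ℝ) : MvPolynomial (Fin k) ℝ :=
  ∑ α ∈ wipIndex k n, MvPolynomial.monomial (Finsupp.equivFunOnFinite.symm α) (Aw ω α)

/-- The operator `T_m(P) = D₁₁P − Σ_j t_j D_{2j}P − m·D₂P`. -/
noncomputable def Tm (k : ℕ) (hk : 2 ≤ k) (m : ℝ) (P : MvPolynomial (Fin k) ℝ) :
    MvPolynomial (Fin k) ℝ :=
  pderiv (⟨0, by omega⟩ : Fin k) (pderiv (⟨0, by omega⟩ : Fin k) P)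
    - ∑ j : Fin k, X j * pderiv (⟨1, by omega⟩ : Fin k) (pderiv j P)
    - C m * pderiv (⟨1, by omega⟩ : Fin k) P

/-- The `j`-th element `γ^{(j)}` of the string generated by `γ`. -/
def strElem (k : ℕ) (hk : 2 ≤ k) (γ : Fin k → ℕ) (j : ℕ) : Fin k → ℕ :=
  fun i => if i = (⟨0, by omega⟩ : Fin k) then γ i + 2 * j
    else if i = (⟨1, by omega⟩ : Fin k) then γ i - j else γ i

/-- The `ω`-weighted string generated by `γ`:
`S_ω(γ) = Σ_{j=0}^{γ₂} A_ω(γ^{(j)})·t^{γ^{(j)}}`. -/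
noncomputable def strPoly (k : ℕ) (hk : 2 ≤ k) (ω : Fin k → ℝ) (γ : Fin k → ℕ) :
    MvPolynomial (Fin k) ℝ :=
  ∑ j ∈ Finset.range (γ (⟨1, by omega⟩ : Fin k) + 1),
    MvPolynomial.monomial (Finsupp.equivFunOnFinite.symm (strElem k hk γ j))
      (Aw ω (strElem k hk γ j))

/-- The generalized operator `T_{a,m}(P) = D₁₁P − Σ_j a_j t_j D_{2j}P − m·D₂P`. -/
noncomputable def Tam (k : ℕ) (hk : 2 ≤ k) (a : Fin k → ℝ) (m : ℝ)
    (P : MvPolynomial (Fin k) ℝ) : MvPolynomial (Fin k) ℝ :=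
  pderiv (⟨0, by omega⟩ : Fin k) (pderiv (⟨0, by omega⟩ : Fin k) P)
    - ∑ j : Fin k, C (a j) * X j * pderiv (⟨1, by omega⟩ : Fin k) (pderiv j P)
    - C m * pderiv (⟨1, by omega⟩ : Fin k) P


namespace GOK
variable {k : ℕ}

def bump (β : Fin k → ℕ) (i : Fin k) : Fin k → ℕ := fun l => β l + if i = l then 1 else 0

noncomputable def E {k : ℕ} : (Fin k → ℕ) ≃ ((Fin k) →₀ ℕ) := Finsupp.equivFunOnFinite.symm

@[simp] lemma E_apply (α : Fin k → ℕ) (l : Fin k) : (E α) l = α l := rfl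


lemma sum_bump (β : Fin k → ℕ) (i : Fin k) : ∑ l, bump β i l = (∑ l, β l) + 1 := by
  simp [bump, Finset.sum_add_distrib]

lemma prod_factorial_bump (β : Fin k → ℕ) (i : Fin k) :
    ∏ l, (bump β i l).factorial = (β i + 1) * ∏ l, (β l).factorial := by
  rw [← Finset.mul_prod_erase univ _ (mem_univ i), ← Finset.mul_prod_erase univ (fun l => (β l).factorial) (mem_univ i)]
  rw [← mul_assoc]
  congr 1
  · simp [bump, Nat.factorial_succ, mul_comm]
  · refine Finset.prod_congr rfl fun l hl => ?_
    have hne : i ≠ l := fun h => (Finset.mem_erase.1 hl).1 h.symm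
    simp [bump, hne]

lemma mult_bump (β : Fin k → ℕ) (i : Fin k) :
    Nat.multinomial univ (bump β i) * (β i + 1) = Nat.multinomial univ β * ((∑ l, β l) + 1) := by
  have h1 := Nat.multinomial_spec univ β
  have h2 := Nat.multinomial_spec univ (bump β i)
  have hpos : 0 < ∏ l, (β l).factorial := Finset.prod_pos fun l _ => Nat.factorial_pos _
  apply Nat.eq_of_mul_eq_mul_left hpos
  calc (∏ l, (β l).factorial) * (Nat.multinomial univ (bump β i) * (β i + 1))
      = (∏ l, (bump β i l).factorial) * Nat.multinomial univ (bump β i) := by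
        rw [prod_factorial_bump]; ring
    _ = (∑ l, bump β i l).factorial := h2
    _ = ((∑ l, β l) + 1).factorial := by rw [sum_bump]
    _ = (∑ l, β l).factorial * ((∑ l, β l) + 1) := by
        rw [Nat.factorial_succ]; ring
    _ = (∏ l, (β l).factorial) * (Nat.multinomial univ β * ((∑ l, β l) + 1)) := by
        rw [← h1]; ring
lemma coeff_D00 (i0 : Fin k) (α β : Fin k → ℕ) (c : ℝ) :
    coeff (E β) (pderiv i0 (pderiv i0 (monomial (E α) c))) =
      if α = bump (bump β i0) i0 then ((β i0 : ℝ) + 1) * ((β i0 : ℝ) + 2) * c else 0 := by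
  simp only [pderiv_monomial, coeff_monomial]
  by_cases hc : α = bump (bump β i0) i0
  · subst hc
    have hcnd : ((E (bump (bump β i0) i0) - Finsupp.single i0 1 - Finsupp.single i0 1) : Fin k →₀ ℕ) = E β := by
      ext l
      simp only [Finsupp.tsub_apply, E_apply, Finsupp.single_apply, bump]
      split_ifs <;> omega
    rw [if_pos hcnd, if_pos rfl]
    have h1 : ((E (bump (bump β i0) i0) - Finsupp.single i0 1 : Fin k →₀ ℕ)) i0 = β i0 + 1 := by
      simp [bump, Finsupp.tsub_apply, Finsupp.single_apply]
    have h2 : (E (bump (bump β i0) i0)) i0 = β i0 + 2 := by simp [bump]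
    rw [h1, h2]; push_cast; ring
  · rw [if_neg hc]
    split_ifs with hcond
    · have hle : α i0 ≤ 1 := by
        by_contra hgt
        push_neg at hgt
        apply hc
        funext l
        have hl := DFunLike.congr_fun hcond l
        simp only [Finsupp.tsub_apply, E_apply, Finsupp.single_apply] at hl
        simp only [bump]
        rcases eq_or_ne i0 l with rfl | hne
        · norm_num at hl ⊢; omega
        · simp only [if_neg hne] at hl ⊢; omega
      have h1 : ((E α - Finsupp.single i0 1 : Fin k →₀ ℕ)) i0 = α i0 - 1 := by
        simp [Finsupp.tsub_apply, Finsupp.single_apply]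
      rw [h1]
      have : α i0 = 0 ∨ α i0 = 1 := by omega
      rcases this with h | h <;> rw [h] <;> norm_num
    · rfl

lemma coeff_Dm (i1 : Fin k) (m : ℝ) (α β : Fin k → ℕ) (c : ℝ) :
    coeff (E β) (C m * pderiv i1 (monomial (E α) c)) =
      if α = bump β i1 then m * ((β i1 : ℝ) + 1) * c else 0 := by
  simp only [pderiv_monomial, coeff_C_mul, coeff_monomial]
  by_cases hc : α = bump β i1
  · subst hc
    have hcnd : ((E (bump β i1) - Finsupp.single i1 1) : Fin k →₀ ℕ) = E β := by
      ext l
      simp only [Finsupp.tsub_apply, E_apply, Finsupp.single_apply, bump]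
      split_ifs <;> omega
    rw [if_pos hcnd, if_pos rfl]
    have h2 : (E (bump β i1)) i1 = β i1 + 1 := by simp [bump]
    rw [h2]; push_cast; ring
  · rw [if_neg hc]
    split_ifs with hcond
    · have hle : α i1 = 0 := by
        by_contra hgt
        apply hc
        funext l
        have hl := DFunLike.congr_fun hcond l
        simp only [Finsupp.tsub_apply, E_apply, Finsupp.single_apply] at hl
        simp only [bump]
        rcases eq_or_ne i1 l with rfl | hne
        · norm_num at hl ⊢; omega
        · simp only [if_neg hne] at hl ⊢; omega
      simp [hle]
    · simp

lemma coeff_Dj (i1 j : Fin k) (aj : ℝ) (α β : Fin k → ℕ) (c : ℝ) :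
    coeff (E β) (C aj * X j * pderiv i1 (pderiv j (monomial (E α) c))) =
      if α = bump β i1 then aj * (β j : ℝ) * ((β i1 : ℝ) + 1) * c else 0 := by
  rw [mul_assoc, ← mul_assoc (C aj), C_mul_X_eq_monomial]
  simp only [pderiv_monomial, monomial_mul, coeff_monomial]
  by_cases hc : α = bump β i1
  · subst hc
    by_cases hβj : β j = 0
    · -- value is zero on both sides
      rw [if_pos rfl]
      have hval : (c * ↑((E (bump β i1)) j) * ↑(((E (bump β i1) - Finsupp.single j 1 : Fin k →₀ ℕ)) i1) : ℝ) = 0 := by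
        by_cases hji : j = i1
        · subst hji
          have h2 : ((E (bump β j) - Finsupp.single j 1 : Fin k →₀ ℕ)) j = 0 := by
            simp [bump, Finsupp.tsub_apply, Finsupp.single_apply, hβj]
          rw [h2]; simp
        · have hij : ¬ i1 = j := fun h => hji h.symm
          have h0 : (E (bump β i1)) j = 0 := by simp [bump, hβj, hij]
          rw [h0]; simp
      split_ifs with hcnd
      · rw [hval, hβj]; simp
      · simp [hβj]
    · have hβj' : 1 ≤ β j := Nat.one_le_iff_ne_zero.2 hβj
      have hcnd : (Finsupp.single j 1 + ((E (bump β i1) - Finsupp.single j 1 : Fin k →₀ ℕ) - Finsupp.single i1 1) : Fin k →₀ ℕ) = E β := by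
        ext l
        simp only [Finsupp.add_apply, Finsupp.tsub_apply, E_apply, Finsupp.single_apply, bump]
        by_cases h1 : j = l <;> by_cases h2 : i1 = l <;> simp_all <;> omega
      rw [if_pos hcnd, if_pos rfl]
      have h1 : (E (bump β i1)) j = β j + (if i1 = j then 1 else 0) := rfl
      have h2 : ((E (bump β i1) - Finsupp.single j 1 : Fin k →₀ ℕ)) i1
          = β i1 + 1 - (if j = i1 then 1 else 0) := by
        simp [bump, Finsupp.tsub_apply, Finsupp.single_apply]
      rw [h1, h2]
      by_cases hji : j = i1
      · subst hji
        simp only [if_pos rfl, Nat.add_sub_cancel]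
        push_cast; ring
      · simp only [if_neg hji, if_neg (fun h : i1 = j => hji h.symm), Nat.sub_zero,
          Nat.add_zero]
        push_cast; ring
  · rw [if_neg hc]
    split_ifs with hcond
    · rcases Nat.eq_zero_or_pos (α j) with hz | hαj
      · have h0 : (E α) j = 0 := hz
        rw [h0]; simp
      · rcases Nat.eq_zero_or_pos (((E α - Finsupp.single j 1 : Fin k →₀ ℕ)) i1) with hz | hα1
        · rw [hz]; simp
        · exfalso
          apply hc
          have hsub : ((E α - Finsupp.single j 1 : Fin k →₀ ℕ)) i1
              = α i1 - (if j = i1 then 1 else 0) := by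
            simp [Finsupp.tsub_apply, Finsupp.single_apply]
          rw [hsub] at hα1
          funext l
          have hl := DFunLike.congr_fun hcond l
          simp only [Finsupp.add_apply, Finsupp.tsub_apply, E_apply, Finsupp.single_apply] at hl
          simp only [bump]
          clear hcond hc hsub
          by_cases h1 : j = l <;> by_cases h2 : i1 = l <;> by_cases h3 : j = i1 <;>
            simp_all <;> omega
    · simp
lemma coeff_Tam (a : Fin k → ℝ) (m : ℝ) (i0 i1 : Fin k) (α β : Fin k → ℕ) (c : ℝ) :
    coeff (E β) (pderiv i0 (pderiv i0 (monomial (E α) c))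
      - ∑ j : Fin k, C (a j) * X j * pderiv i1 (pderiv j (monomial (E α) c))
      - C m * pderiv i1 (monomial (E α) c)) =
    (if α = bump (bump β i0) i0 then
        ((β i0 : ℝ) + 1) * ((β i0 : ℝ) + 2) * c else 0)
    - (if α = bump β i1 then
        ((∑ j, a j * (β j : ℝ)) + m) * ((β i1 : ℝ) + 1) * c else 0) := by
  rw [coeff_sub, coeff_sub, MvPolynomial.coeff_sum]
  rw [coeff_D00, coeff_Dm]
  have hsum : ∑ j : Fin k, coeff (E β)
      (C (a j) * X j * pderiv i1 (pderiv j (monomial (E α) c)))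
      = ∑ j : Fin k, (if α = bump β i1 then
          a j * (β j : ℝ) * ((β i1 : ℝ) + 1) * c else 0) := by
    exact Finset.sum_congr rfl fun j _ => coeff_Dj _ _ _ _ _ _
  rw [hsum]
  split_ifs with h1 h2 h2 <;>
    simp only [Finset.sum_const_zero, sub_zero, add_mul, Finset.sum_mul] <;> ring

lemma mem_wipIndex {n : ℕ} (α : Fin k → ℕ) : α ∈ wipIndex k n ↔ isoDeg α = n := by
  simp only [wipIndex, Finset.mem_filter, Fintype.mem_piFinset, Finset.mem_range]
  constructor
  · exact fun h => h.2
  · intro hd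
    refine ⟨fun i => ?_, hd⟩
    have h1 : α i ≤ (i.1 + 1) * α i := Nat.le_mul_of_pos_left _ (by omega)
    have h2 : (i.1 + 1) * α i ≤ isoDeg α :=
      Finset.single_le_sum (f := fun l : Fin k => (l.1 + 1) * α l)
        (fun _ _ => Nat.zero_le _) (Finset.mem_univ i)
    omega

lemma isoDeg_bump (β : Fin k → ℕ) (i : Fin k) :
    isoDeg (bump β i) = isoDeg β + (i.1 + 1) := by
  unfold isoDeg bump
  rw [show (∑ l : Fin k, (l.1 + 1) * (β l + if i = l then 1 else 0))
      = ∑ l : Fin k, ((l.1 + 1) * β l + (l.1 + 1) * (if i = l then 1 else 0)) from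
    Finset.sum_congr rfl fun l _ => by ring]
  rw [Finset.sum_add_distrib]
  congr 1
  simp [mul_ite, Finset.sum_ite_eq]

lemma sum_bump_cast (β : Fin k → ℕ) (i : Fin k) :
    ∑ l, ((bump β i l : ℕ) : ℝ) = (∑ l, (β l : ℝ)) + 1 := by
  have h := sum_bump β i
  have : ((∑ l, bump β i l : ℕ) : ℝ) = (((∑ l, β l) + 1 : ℕ) : ℝ) := by rw [h]
  push_cast at this
  exact this

lemma sum_bump_mul (β : Fin k → ℕ) (i : Fin k) (f : Fin k → ℝ) :
    ∑ l, ((bump β i l : ℕ) : ℝ) * f l = (∑ l, (β l : ℝ) * f l) + f i := by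
  unfold bump
  rw [show (∑ l : Fin k, (((β l + if i = l then 1 else 0 : ℕ) : ℝ)) * f l)
      = ∑ l : Fin k, ((β l : ℝ) * f l + (if i = l then f l else 0)) from
    Finset.sum_congr rfl fun l _ => by split_ifs <;> push_cast <;> ring]
  rw [Finset.sum_add_distrib, Finset.sum_ite_eq]
  simp

lemma Aw_bump (ω : Fin k → ℝ) (β : Fin k → ℕ) (i : Fin k) :
    Aw ω (bump β i) * ((∑ l, (β l : ℝ)) + 1)
      = (Nat.multinomial Finset.univ (bump β i) : ℝ) * ((∑ l, (β l : ℝ) * ω l) + ω i) := by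
  unfold Aw
  rw [sum_bump_cast, sum_bump_mul]
  have hpos : (∑ l, (β l : ℝ)) + 1 ≠ 0 := by positivity
  field_simp

lemma mult_bump_cast (β : Fin k → ℕ) (i : Fin k) :
    (Nat.multinomial Finset.univ (bump β i) : ℝ) * ((β i : ℝ) + 1)
      = (Nat.multinomial Finset.univ β : ℝ) * ((∑ l, (β l : ℝ)) + 1) := by
  have := mult_bump β i
  have hc : ((Nat.multinomial Finset.univ (bump β i) * (β i + 1) : ℕ) : ℝ)
      = ((Nat.multinomial Finset.univ β * ((∑ l, β l) + 1) : ℕ) : ℝ) := by rw [this]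
  push_cast at hc
  exact hc

lemma sum_mul_bump (β : Fin k → ℕ) (i : Fin k) (f : Fin k → ℝ) :
    ∑ l, f l * ((bump β i l : ℕ) : ℝ) = (∑ l, f l * (β l : ℝ)) + f i := by
  have := sum_bump_mul β i f
  calc ∑ l, f l * ((bump β i l : ℕ) : ℝ) = ∑ l, ((bump β i l : ℕ) : ℝ) * f l :=
        Finset.sum_congr rfl fun l _ => mul_comm _ _
    _ = (∑ l, (β l : ℝ) * f l) + f i := this
    _ = (∑ l, f l * (β l : ℝ)) + f i := by
        rw [show (∑ l, (β l : ℝ) * f l) = ∑ l, f l * (β l : ℝ) from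
          Finset.sum_congr rfl fun l _ => mul_comm _ _]

lemma master (hk : 2 ≤ k) (a : Fin k → ℝ) (m : ℝ) (ω : Fin k → ℝ)
    (h : ∀ n, 1 ≤ n → Tam k hk a m (WIP k n ω) = 0) (β : Fin k → ℕ) :
    ((∑ l, (β l : ℝ)) + 1) * ((∑ l, (β l : ℝ) * ω l) + 2 * ω ⟨0, by omega⟩)
      = ((∑ j, a j * (β j : ℝ)) + m) * ((∑ l, (β l : ℝ) * ω l) + ω ⟨1, by omega⟩) := by
  set i0 : Fin k := ⟨0, by omega⟩ with hi0
  set i1 : Fin k := ⟨1, by omega⟩ with hi1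
  set n := isoDeg β + 2 with hn
  have h0 := h n (by omega)
  have hexp : Tam k hk a m (WIP k n ω) = ∑ α ∈ wipIndex k n,
      (pderiv i0 (pderiv i0 (monomial (E α) (Aw ω α)))
        - ∑ j : Fin k, C (a j) * X j * pderiv i1 (pderiv j (monomial (E α) (Aw ω α)))
        - C m * pderiv i1 (monomial (E α) (Aw ω α))) := by
    unfold Tam WIP
    rw [Finset.sum_sub_distrib, Finset.sum_sub_distrib]
    congr 1
    · congr 1
      · rw [map_sum, map_sum]
        rfl
      · rw [Finset.sum_comm]
        refine Finset.sum_congr rfl fun j _ => ?_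
        rw [map_sum, map_sum, Finset.mul_sum]
        rfl
    · rw [map_sum, Finset.mul_sum]
      rfl
  rw [hexp] at h0
  have hco := congrArg (MvPolynomial.coeff (E β)) h0
  rw [MvPolynomial.coeff_sum, coeff_zero] at hco
  rw [Finset.sum_congr rfl (fun α _ => coeff_Tam a m i0 i1 α β (Aw ω α))] at hco
  rw [Finset.sum_sub_distrib, Finset.sum_ite_eq' (wipIndex k n), Finset.sum_ite_eq' (wipIndex k n)] at hco
  have hm1 : bump (bump β i0) i0 ∈ wipIndex k n := by
    rw [mem_wipIndex, isoDeg_bump, isoDeg_bump]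
    try (show isoDeg β + (0 + 1) + (0 + 1) = isoDeg β + 2; omega)
  have hm2 : bump β i1 ∈ wipIndex k n := by
    rw [mem_wipIndex, isoDeg_bump]
  rw [if_pos hm1, if_pos hm2] at hco
  -- abbreviations
  set S := ∑ l, (β l : ℝ) with hS
  set W := ∑ l, (β l : ℝ) * ω l with hW
  set A := ∑ j, a j * (β j : ℝ) with hA
  set M := (Nat.multinomial Finset.univ β : ℝ) with hM
  set M1 := (Nat.multinomial Finset.univ (bump β i1) : ℝ) with hM1
  set Mb := (Nat.multinomial Finset.univ (bump β i0) : ℝ) with hMb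
  set M2 := (Nat.multinomial Finset.univ (bump (bump β i0) i0) : ℝ) with hM2
  set A2 := Aw ω (bump (bump β i0) i0) with hA2d
  set A1 := Aw ω (bump β i1) with hA1d
  have hA2 : A2 * ((S + 1) + 1) = M2 * ((W + ω i0) + ω i0) := by
    have := Aw_bump ω (bump β i0) i0
    rw [sum_bump_cast, sum_bump_mul] at this
    exact this
  have hA1 : A1 * (S + 1) = M1 * (W + ω i1) := Aw_bump ω β i1
  have hF2 : M1 * ((β i1 : ℝ) + 1) = M * (S + 1) := mult_bump_cast β i1
  have hF1a : Mb * ((β i0 : ℝ) + 1) = M * (S + 1) := mult_bump_cast β i0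
  have hF1b : M2 * ((β i0 : ℝ) + 2) = Mb * (S + 2) := by
    have := mult_bump_cast (bump β i0) i0
    rw [sum_bump_cast] at this
    have hb : ((bump β i0 i0 : ℕ) : ℝ) = (β i0 : ℝ) + 1 := by
      simp [bump]
    rw [hb] at this
    calc M2 * ((β i0 : ℝ) + 2) = M2 * ((β i0 : ℝ) + 1 + 1) := by ring
      _ = Mb * (S + 1 + 1) := this
      _ = Mb * (S + 2) := by ring
  have hMpos : 0 < M := by
    rw [hM]
    exact_mod_cast Nat.multinomial_pos _ _
  have hSnn : 0 ≤ S := Finset.sum_nonneg fun l _ => by positivity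
  have hfac : M * (S + 1) * (S + 2) ≠ 0 := by positivity
  apply mul_left_cancel₀ hfac
  linear_combination (-(S+1)*(S+2)*(W+2*ω i0)) * hF1a
    + (-(S+1)*((β i0 : ℝ)+1)*(W+2*ω i0)) * hF1b
    + (-(S+1)*((β i0 : ℝ)+1)*((β i0 : ℝ)+2)) * hA2
    + ((S+1)*(S+2)) * hco
    + ((S+2)*(A+m)*((β i1 : ℝ)+1)) * hA1
    + ((S+2)*(A+m)*(W+ω i1)) * hF2

end GOK

/-- Theorem 4.3: the generalized operator `T_{a,m}` annihilates a nontrivial weighted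
sequence only when `a_j = 1` for all `j` and `m = 1` or `m = 2`. -/
theorem generalized_operator_kernel (k : ℕ) (hk : 3 ≤ k) (a : Fin k → ℝ) (m : ℝ)
    (ω : Fin k → ℝ) (hω : ω ≠ 0)
    (h : ∀ n, 1 ≤ n → Tam k (by omega) a m (WIP k n ω) = 0) :
    (∀ j, a j = 1) ∧ (m = 1 ∨ m = 2) := by
  have hk2 : 2 ≤ k := by omega
  have hmas := GOK.master hk2 a m ω h
  have e0 : 2 * ω ⟨0, by omega⟩ = m * ω ⟨1, by omega⟩ := by
    have h2 := hmas (fun _ => 0)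
    simp only [Nat.cast_zero, Finset.sum_const_zero, zero_mul, mul_zero,
      zero_add, add_zero, one_mul] at h2
    linear_combination h2
  have e1 : ∀ i, 2 * (ω i + 2 * ω ⟨0, by omega⟩) = (a i + m) * (ω i + ω ⟨1, by omega⟩) := by
    intro i
    have h2 := hmas (GOK.bump (fun _ => 0) i)
    rw [GOK.sum_bump_cast, GOK.sum_bump_mul, GOK.sum_mul_bump] at h2
    simp only [Nat.cast_zero, Finset.sum_const_zero, zero_mul, mul_zero,
      zero_add, add_zero, one_mul] at h2
    linear_combination h2
  have e2 : ∀ i j, 3 * ((ω i + ω j) + 2 * ω ⟨0, by omega⟩)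
      = ((a i + a j) + m) * ((ω i + ω j) + ω ⟨1, by omega⟩) := by
    intro i j
    have h2 := hmas (GOK.bump (GOK.bump (fun _ => 0) i) j)
    rw [GOK.sum_bump_cast, GOK.sum_bump_cast, GOK.sum_bump_mul, GOK.sum_bump_mul,
      GOK.sum_mul_bump, GOK.sum_mul_bump] at h2
    simp only [Nat.cast_zero, Finset.sum_const_zero, zero_mul, mul_zero,
      zero_add, add_zero, one_mul] at h2
    linear_combination h2
  have cross : ∀ i j, ω i + ω j = a i * ω j + a j * ω i := by
    intro i j
    linear_combination (e2 i j) - (e1 i) - (e1 j) + e0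
  obtain ⟨i, hi⟩ := Function.ne_iff.1 hω
  have ha : ∀ j, a j = 1 := by
    intro j
    by_cases hj : ω j = 0
    · have hc := cross i j
      rw [hj] at hc
      have h3 : a j * ω i = 1 * ω i := by linear_combination -hc
      exact mul_right_cancel₀ hi h3
    · have hc := cross j j
      have h3 : a j * ω j = 1 * ω j := by linear_combination (-(1:ℝ)/2) * hc
      exact mul_right_cancel₀ hj h3
  refine ⟨ha, ?_⟩
  by_cases hm : m = 1
  · exact Or.inl hm
  · right
    have hconst : ∀ j, ω j = ω ⟨1, by omega⟩ := by
      intro j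
      have h1 := e1 j
      rw [ha j] at h1
      have key : (m - 1) * ω j = (m - 1) * ω ⟨1, by omega⟩ := by
        linear_combination (-1 : ℝ) * h1 + 2 * e0
      exact mul_left_cancel₀ (sub_ne_zero.2 hm) key
    have hω1 : ω (⟨1, by omega⟩ : Fin k) ≠ 0 := by
      intro h0
      apply hω
      funext l
      rw [hconst l, h0]
      rfl
    have h4 := e0
    rw [hconst ⟨0, by omega⟩] at h4
    have h5 : m * ω ⟨1, by omega⟩ = 2 * ω ⟨1, by omega⟩ := by linear_combination -h4
    exact mul_right_cancel₀ hω1 h5
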